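/- Let 0 < ε ≤ 1/2, let X ∈ ℝ^{n×d} have full column rank d, let Y ∈ ℝⁿ, and let Π ∈ ℝ^{k×n} be an (ε/3)-subspace embedding for the column space of the augmented matrix [X,Y]. Let γ be a minimizer of β ↦ ‖Xβ − Y‖² and ν a minimizer of β ↦ ‖Π(Xβ − Y)‖². Suppose ‖Xγ‖ ≥ ρ‖Y‖ for some ρ ∈ (0,1]. Then ‖ν‖ ≤ (1 + (κ(X)/ρ)·ε)·‖γ‖, where κ(X) = σ_max(X)/σ_min(X) is the condition number of X. -/

import Mathlib

open Matrix

noncomputable section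

/-- Squared Euclidean norm of a vector. -/
def sqNorm {ι : Type*} [Fintype ι] (v : ι → ℝ) : ℝ := ∑ i, (v i) ^ 2

/-- Euclidean norm of a vector. -/
def eNorm {ι : Type*} [Fintype ι] (v : ι → ℝ) : ℝ := Real.sqrt (sqNorm v)

/-- `P` is an `ε`-subspace embedding for the column space of `A`:
for all `x`, `(1-ε)‖Ax‖² ≤ ‖PAx‖² ≤ (1+ε)‖Ax‖²`. -/
def IsSubspaceEmbedding {K N C : Type*} [Fintype K] [Fintype N] [Fintype C]
    (P : Matrix K N ℝ) (A : Matrix N C ℝ) (ε : ℝ) : Prop :=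
  ∀ x : C → ℝ,
    (1 - ε) * sqNorm (A.mulVec x) ≤ sqNorm ((P * A).mulVec x) ∧
      sqNorm ((P * A).mulVec x) ≤ (1 + ε) * sqNorm (A.mulVec x)

/-- The augmented matrix `[X, Y]` obtained by appending the column `Y` to `X`. -/
def augment {n d : ℕ} (X : Matrix (Fin n) (Fin d) ℝ) (Y : Fin n → ℝ) :
    Matrix (Fin n) (Fin (d + 1)) ℝ :=
  Matrix.of fun i => Fin.snoc (X i) (Y i)

/-- The squared smallest singular value of `M`: `σ_min(M)² = inf_{‖x‖ = 1} ‖Mx‖²`. -/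
def sigMinSq {N C : Type*} [Fintype N] [Fintype C] (M : Matrix N C ℝ) : ℝ :=
  sInf {r : ℝ | ∃ x : C → ℝ, sqNorm x = 1 ∧ r = sqNorm (M.mulVec x)}

/-- The squared largest singular value of `M`: `σ_max(M)² = sup_{‖x‖ = 1} ‖Mx‖²`. -/
def sigMaxSq {N C : Type*} [Fintype N] [Fintype C] (M : Matrix N C ℝ) : ℝ :=
  sSup {r : ℝ | ∃ x : C → ℝ, sqNorm x = 1 ∧ r = sqNorm (M.mulVec x)}

/-- The condition number `κ(M) = σ_max(M) / σ_min(M)`. -/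
def condNum {N C : Type*} [Fintype N] [Fintype C] (M : Matrix N C ℝ) : ℝ :=
  Real.sqrt (sigMaxSq M) / Real.sqrt (sigMinSq M)

def dotp {ι : Type*} [Fintype ι] (u v : ι → ℝ) : ℝ := ∑ i, u i * v i
lemma sqNorm_nonneg {ι : Type*} [Fintype ι] (v : ι → ℝ) : 0 ≤ sqNorm v :=
  Finset.sum_nonneg fun _ _ => sq_nonneg _
lemma sqNorm_add {ι : Type*} [Fintype ι] (u v : ι → ℝ) :
    sqNorm (u + v) = sqNorm u + 2 * dotp u v + sqNorm v := by
  simp only [sqNorm, dotp, Pi.add_apply, Finset.mul_sum, ← Finset.sum_add_distrib]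
  exact Finset.sum_congr rfl fun i _ => by ring
lemma sqNorm_smul {ι : Type*} [Fintype ι] (a : ℝ) (v : ι → ℝ) :
    sqNorm (a • v) = a ^ 2 * sqNorm v := by
  simp only [sqNorm, Pi.smul_apply, smul_eq_mul, Finset.mul_sum]
  exact Finset.sum_congr rfl fun i _ => by ring
lemma dotp_comm {ι : Type*} [Fintype ι] (u v : ι → ℝ) : dotp u v = dotp v u := by
  simp only [dotp, mul_comm]
lemma dotp_self {ι : Type*} [Fintype ι] (v : ι → ℝ) : dotp v v = sqNorm v := by
  simp only [dotp, sqNorm, sq]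
lemma dotp_add_right {ι : Type*} [Fintype ι] (u v w : ι → ℝ) :
    dotp u (v + w) = dotp u v + dotp u w := by
  simp only [dotp, Pi.add_apply, mul_add, Finset.sum_add_distrib]
lemma dotp_smul_left {ι : Type*} [Fintype ι] (a : ℝ) (u v : ι → ℝ) :
    dotp (a • u) v = a * dotp u v := by
  simp only [dotp, Pi.smul_apply, smul_eq_mul, Finset.mul_sum]
  exact Finset.sum_congr rfl fun i _ => by ring
lemma dotp_le {ι : Type*} [Fintype ι] (u v : ι → ℝ) : dotp u v ≤ eNorm u * eNorm v := by
  have h := Finset.sum_mul_sq_le_sq_mul_sq Finset.univ u v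
  have h2 : dotp u v ≤ |dotp u v| := le_abs_self _
  refine h2.trans ?_
  rw [eNorm, eNorm, ← Real.sqrt_mul (sqNorm_nonneg u)]
  rw [← Real.sqrt_sq_eq_abs]
  exact Real.sqrt_le_sqrt h
lemma eNorm_nonneg {ι : Type*} [Fintype ι] (v : ι → ℝ) : 0 ≤ eNorm v := Real.sqrt_nonneg _
lemma sq_eNorm {ι : Type*} [Fintype ι] (v : ι → ℝ) : eNorm v ^ 2 = sqNorm v :=
  Real.sq_sqrt (sqNorm_nonneg v)
lemma eNorm_add_le {ι : Type*} [Fintype ι] (u v : ι → ℝ) :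
    eNorm (u + v) ≤ eNorm u + eNorm v := by
  have h1 : sqNorm (u + v) ≤ (eNorm u + eNorm v) ^ 2 := by
    rw [sqNorm_add]
    have := dotp_le u v
    nlinarith [sq_eNorm u, sq_eNorm v]
  calc eNorm (u + v) = Real.sqrt (sqNorm (u + v)) := rfl
    _ ≤ Real.sqrt ((eNorm u + eNorm v) ^ 2) := Real.sqrt_le_sqrt h1
    _ = eNorm u + eNorm v := Real.sqrt_sq (add_nonneg (eNorm_nonneg u) (eNorm_nonneg v))
lemma quad_b_eq_zero (a b : ℝ) (ha : 0 ≤ a) (h : ∀ t : ℝ, 0 ≤ a * t ^ 2 + b * t) : b = 0 := by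
  rcases eq_or_lt_of_le ha with h0 | h0
  · have h1 := h 1
    have h2 := h (-1)
    rw [← h0] at h1 h2; simp at h1 h2; linarith
  · have key : a * (-b / (2 * a)) ^ 2 + b * (-b / (2 * a)) = -b ^ 2 / (4 * a) := by
      field_simp; ring
    have h1 := h (-b / (2 * a))
    rw [key] at h1
    have h4 : (0:ℝ) < 4 * a := by linarith
    have h2 := (le_div_iff₀ h4).mp h1
    nlinarith [sq_nonneg b]
lemma quad_disc (a b c : ℝ) (ha : 0 ≤ a) (hc : 0 ≤ c)
    (h : ∀ t : ℝ, 0 ≤ a * t ^ 2 + b * t + c) : b ^ 2 ≤ 4 * a * c := by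
  rcases eq_or_lt_of_le ha with h0 | h0
  · have hb : b = 0 := by
      by_contra hb
      have h1 := h (-(c + 1) / b)
      rw [← h0] at h1
      field_simp at h1
      have hb2 : 0 < b ^ 2 := lt_of_le_of_ne (sq_nonneg b) (Ne.symm (pow_ne_zero 2 hb))
      have h3 := mul_nonneg h1 hb2.le
      rw [div_mul_cancel₀ _ hb2.ne'] at h3
      nlinarith [sq_nonneg b]
    rw [hb]; nlinarith
  · have key : a * (-b / (2 * a)) ^ 2 + b * (-b / (2 * a)) + c = (4 * a * c - b ^ 2) / (4 * a) := by
      field_simp; ring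
    have h1 := h (-b / (2 * a))
    rw [key] at h1
    have h4 : (0:ℝ) < 4 * a := by linarith
    have h2 := (le_div_iff₀ h4).mp h1
    linarith
lemma min_orth {ι : Type*} [Fintype ι] (r w : ι → ℝ)
    (h : ∀ t : ℝ, sqNorm r ≤ sqNorm (r + t • w)) : dotp w r = 0 := by
  have key : ∀ t : ℝ, 0 ≤ sqNorm w * t ^ 2 + (2 * dotp w r) * t := by
    intro t
    have := h t
    rw [sqNorm_add, sqNorm_smul, dotp_comm r (t • w), dotp_smul_left] at this
    nlinarith [this]
  have := quad_b_eq_zero _ _ (sqNorm_nonneg w) key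
  linarith
lemma augment_mulVec {n d : ℕ} (X : Matrix (Fin n) (Fin d) ℝ) (Y : Fin n → ℝ)
    (β : Fin d → ℝ) (c : ℝ) :
    (augment X Y).mulVec (Fin.snoc β c) = X.mulVec β + c • Y := by
  funext i
  simp only [augment, Matrix.mulVec, dotProduct, Matrix.of_apply, Pi.add_apply,
    Pi.smul_apply, smul_eq_mul]
  rw [Fin.sum_univ_castSucc]
  simp only [Fin.snoc_castSucc, Fin.snoc_last]
  ring
lemma sqNorm_eq_zero_iff {ι : Type*} [Fintype ι] (v : ι → ℝ) : sqNorm v = 0 ↔ v = 0 := by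
  constructor
  · intro h
    funext i
    have := (Finset.sum_eq_zero_iff_of_nonneg (fun i _ => sq_nonneg (v i))).mp h i (Finset.mem_univ i)
    have := pow_eq_zero_iff (n := 2) (by norm_num) |>.mp this
    simpa using this
  · intro h; subst h; simp [sqNorm]
lemma sqNorm_pos {ι : Type*} [Fintype ι] {v : ι → ℝ} (h : v ≠ 0) : 0 < sqNorm v :=
  lt_of_le_of_ne (sqNorm_nonneg v) (fun h' => h ((sqNorm_eq_zero_iff v).mp h'.symm))
lemma continuous_sqNorm {ι : Type*} [Fintype ι] : Continuous (sqNorm : (ι → ℝ) → ℝ) := by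
  unfold sqNorm
  exact continuous_finset_sum _ fun i _ => (continuous_apply i).pow 2
lemma continuous_mulVec {n d : ℕ} (M : Matrix (Fin n) (Fin d) ℝ) :
    Continuous (fun x : Fin d → ℝ => M.mulVec x) := by
  refine continuous_pi fun i => ?_
  simp only [Matrix.mulVec, dotProduct]
  exact continuous_finset_sum _ fun j _ => continuous_const.mul (continuous_apply j)
lemma sphere_isCompact (d : ℕ) : IsCompact {x : Fin d → ℝ | sqNorm x = 1} := by
  apply Metric.isCompact_of_isClosed_isBounded
  · exact isClosed_singleton.preimage continuous_sqNorm
  · rw [Metric.isBounded_iff_subset_closedBall (0 : Fin d → ℝ)]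
    refine ⟨1, fun x hx => ?_⟩
    simp only [Metric.mem_closedBall, dist_zero_right]
    rw [pi_norm_le_iff_of_nonneg zero_le_one]
    intro i
    have h1 : (x i) ^ 2 ≤ 1 := by
      have := Finset.single_le_sum (f := fun j => (x j) ^ 2)
        (fun j _ => sq_nonneg (x j)) (Finset.mem_univ i)
      have hx' : sqNorm x = 1 := hx
      rw [sqNorm] at hx'
      simpa [hx'] using this
    rw [Real.norm_eq_abs]
    nlinarith [sq_abs (x i), abs_nonneg (x i)]
lemma svSet_eq_image {n d : ℕ} (M : Matrix (Fin n) (Fin d) ℝ) :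
    {r : ℝ | ∃ x : Fin d → ℝ, sqNorm x = 1 ∧ r = sqNorm (M.mulVec x)}
      = (fun x => sqNorm (M.mulVec x)) '' {x : Fin d → ℝ | sqNorm x = 1} := by
  ext r
  constructor
  · rintro ⟨x, hx, rfl⟩; exact ⟨x, hx, rfl⟩
  · rintro ⟨x, hx, rfl⟩; exact ⟨x, hx, rfl⟩
lemma svSet_bddBelow {n d : ℕ} (M : Matrix (Fin n) (Fin d) ℝ) :
    BddBelow {r : ℝ | ∃ x : Fin d → ℝ, sqNorm x = 1 ∧ r = sqNorm (M.mulVec x)} := by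
  refine ⟨0, fun r hr => ?_⟩
  obtain ⟨x, _, rfl⟩ := hr
  exact sqNorm_nonneg _
lemma svSet_bddAbove {n d : ℕ} (M : Matrix (Fin n) (Fin d) ℝ) :
    BddAbove {r : ℝ | ∃ x : Fin d → ℝ, sqNorm x = 1 ∧ r = sqNorm (M.mulVec x)} := by
  rw [svSet_eq_image]
  exact ((sphere_isCompact d).image (continuous_sqNorm.comp (continuous_mulVec M))).bddAbove

/-- unit-normalization of a nonzero vector lies on the sphere -/
lemma unit_mem {ι : Type*} [Fintype ι] {v : ι → ℝ} (hv : v ≠ 0) :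
    sqNorm ((Real.sqrt (sqNorm v))⁻¹ • v) = 1 := by
  rw [sqNorm_smul]
  have h := sqNorm_pos hv
  rw [inv_pow, Real.sq_sqrt (le_of_lt h)]
  field_simp
lemma sigMinSq_mul_le {n d : ℕ} (M : Matrix (Fin n) (Fin d) ℝ) (v : Fin d → ℝ) :
    sigMinSq M * sqNorm v ≤ sqNorm (M.mulVec v) := by
  rcases eq_or_ne v 0 with rfl | hv
  · rw [(sqNorm_eq_zero_iff (0 : Fin d → ℝ)).mpr rfl, mul_zero]
    exact sqNorm_nonneg _
  · have hpos := sqNorm_pos hv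
    set c := Real.sqrt (sqNorm v) with hc
    have hcpos : 0 < c := Real.sqrt_pos.mpr hpos
    have hmem : sqNorm (M.mulVec (c⁻¹ • v)) ∈
        {r : ℝ | ∃ x : Fin d → ℝ, sqNorm x = 1 ∧ r = sqNorm (M.mulVec x)} :=
      ⟨c⁻¹ • v, unit_mem hv, rfl⟩
    have h1 := csInf_le (svSet_bddBelow M) hmem
    rw [Matrix.mulVec_smul, sqNorm_smul] at h1
    have hc2 : c ^ 2 = sqNorm v := Real.sq_sqrt (le_of_lt hpos)
    have : sigMinSq M * c ^ 2 ≤ sqNorm (M.mulVec v) := by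
      calc sigMinSq M * c ^ 2 ≤ (c⁻¹ ^ 2 * sqNorm (M.mulVec v)) * c ^ 2 :=
            mul_le_mul_of_nonneg_right h1 (sq_nonneg c)
        _ = sqNorm (M.mulVec v) := by field_simp
    rwa [hc2] at this
lemma le_sigMaxSq_mul {n d : ℕ} (M : Matrix (Fin n) (Fin d) ℝ) (v : Fin d → ℝ) :
    sqNorm (M.mulVec v) ≤ sigMaxSq M * sqNorm v := by
  rcases eq_or_ne v 0 with rfl | hv
  · rw [(sqNorm_eq_zero_iff (0 : Fin d → ℝ)).mpr rfl, mul_zero, Matrix.mulVec_zero,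
      (sqNorm_eq_zero_iff (0 : Fin n → ℝ)).mpr rfl]
  · have hpos := sqNorm_pos hv
    set c := Real.sqrt (sqNorm v) with hc
    have hcpos : 0 < c := Real.sqrt_pos.mpr hpos
    have hmem : sqNorm (M.mulVec (c⁻¹ • v)) ∈
        {r : ℝ | ∃ x : Fin d → ℝ, sqNorm x = 1 ∧ r = sqNorm (M.mulVec x)} :=
      ⟨c⁻¹ • v, unit_mem hv, rfl⟩
    have h1 := le_csSup (svSet_bddAbove M) hmem
    rw [Matrix.mulVec_smul, sqNorm_smul] at h1
    have hc2 : c ^ 2 = sqNorm v := Real.sq_sqrt (le_of_lt hpos)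
    rw [← hc2]
    calc sqNorm (M.mulVec v) = (c⁻¹ ^ 2 * sqNorm (M.mulVec v)) * c ^ 2 := by field_simp
      _ ≤ sigMaxSq M * c ^ 2 := mul_le_mul_of_nonneg_right h1 (sq_nonneg c)
lemma mulVec_injective_of_rank {n d : ℕ} (X : Matrix (Fin n) (Fin d) ℝ) (hrank : X.rank = d) :
    Function.Injective (fun v : Fin d → ℝ => X.mulVec v) := by
  have h1 := LinearMap.finrank_range_add_finrank_ker X.mulVecLin
  rw [show Matrix.rank X = Module.finrank ℝ (LinearMap.range X.mulVecLin) from rfl] at hrank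
  rw [hrank] at h1
  have h2 : Module.finrank ℝ (Fin d → ℝ) = d := by simp
  rw [h2] at h1
  have h3 : Module.finrank ℝ (LinearMap.ker X.mulVecLin) = 0 := by omega
  have h4 : LinearMap.ker X.mulVecLin = ⊥ := Submodule.finrank_eq_zero.mp h3
  have h5 := LinearMap.ker_eq_bot.mp h4
  intro a b hab
  exact h5 (by simpa [Matrix.mulVecLin_apply] using hab)
lemma sigMinSq_pos {n d : ℕ} (X : Matrix (Fin n) (Fin d) ℝ) (hd : 0 < d)
    (hrank : X.rank = d) : 0 < sigMinSq X := by
  have hinj := mulVec_injective_of_rank X hrank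
  -- a point on the sphere
  set x₀ : Fin d → ℝ := Pi.single ⟨0, hd⟩ 1 with hx₀def
  have hx₀ : sqNorm x₀ = 1 := by
    simp only [sqNorm, hx₀def, Pi.single_apply]
    rw [Finset.sum_eq_single ⟨0, hd⟩]
    · simp
    · intro b _ hb; simp [hb]
    · simp
  obtain ⟨xm, hxmS, hmin⟩ := (sphere_isCompact d).exists_isMinOn ⟨x₀, hx₀⟩
    ((continuous_sqNorm.comp (continuous_mulVec X)).continuousOn)
  have hxm1 : sqNorm xm = 1 := hxmS
  have hxm0 : xm ≠ 0 := by
    intro h; rw [h, (sqNorm_eq_zero_iff (0 : Fin d → ℝ)).mpr rfl] at hxm1; norm_num at hxm1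
  have hXxm : X.mulVec xm ≠ 0 := by
    intro h
    exact hxm0 (hinj (by simpa [Matrix.mulVec_zero] using h))
  have hfpos : 0 < sqNorm (X.mulVec xm) := sqNorm_pos hXxm
  have hle : sqNorm (X.mulVec xm) ≤ sigMinSq X := by
    refine le_csInf ⟨sqNorm (X.mulVec x₀), ⟨x₀, hx₀, rfl⟩⟩ ?_
    rintro r ⟨x, hx, rfl⟩
    exact hmin hx
  linarith
lemma sigMaxSq_nonneg {n d : ℕ} (X : Matrix (Fin n) (Fin d) ℝ) (hd : 0 < d) :
    0 ≤ sigMaxSq X := by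
  set x₀ : Fin d → ℝ := Pi.single ⟨0, hd⟩ 1 with hx₀def
  have hx₀ : sqNorm x₀ = 1 := by
    simp only [sqNorm, hx₀def, Pi.single_apply]
    rw [Finset.sum_eq_single ⟨0, hd⟩]
    · simp
    · intro b _ hb; simp [hb]
    · simp
  have := le_csSup (svSet_bddAbove X) (⟨x₀, hx₀, rfl⟩ :
    sqNorm (X.mulVec x₀) ∈ {r : ℝ | ∃ x : Fin d → ℝ, sqNorm x = 1 ∧ r = sqNorm (X.mulVec x)})
  exact le_trans (sqNorm_nonneg _) this
lemma dotp_neg_right {ι : Type*} [Fintype ι] (u v : ι → ℝ) : dotp u (-v) = -dotp u v := by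
  simp only [dotp, Pi.neg_apply, mul_neg, Finset.sum_neg_distrib]
lemma sqNorm_neg {ι : Type*} [Fintype ι] (v : ι → ℝ) : sqNorm (-v) = sqNorm v := by
  simp only [sqNorm, Pi.neg_apply, neg_sq]
lemma sqNorm_sub {ι : Type*} [Fintype ι] (u v : ι → ℝ) :
    sqNorm (u - v) = sqNorm u - 2 * dotp u v + sqNorm v := by
  rw [sub_eq_add_neg, sqNorm_add, dotp_neg_right, sqNorm_neg]; ring
lemma sqNorm_smul_add {ι : Type*} [Fintype ι] (s : ℝ) (a b : ι → ℝ) :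
    sqNorm (s • a + b) = s ^ 2 * sqNorm a + 2 * s * dotp a b + sqNorm b := by
  rw [sqNorm_add, sqNorm_smul, dotp_smul_left]; ring
lemma sqNorm_smul_sub {ι : Type*} [Fintype ι] (s : ℝ) (a b : ι → ℝ) :
    sqNorm (s • a - b) = s ^ 2 * sqNorm a - 2 * s * dotp a b + sqNorm b := by
  rw [sqNorm_sub, sqNorm_smul, dotp_smul_left]; ring

set_option maxHeartbeats 1000000 in
/-- Bound on the norm of the sketched least squares solution:
if `‖Xγ‖ ≥ ρ‖Y‖` then `‖ν‖ ≤ (1 + (κ(X)/ρ)·ε)·‖γ‖`. -/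
theorem sketched_solution_norm_bound {n d k : ℕ} {ε : ℝ} (hε : 0 < ε) (hε' : ε ≤ 1 / 2)
    (X : Matrix (Fin n) (Fin d) ℝ) (hrank : X.rank = d) (Y : Fin n → ℝ)
    (P : Matrix (Fin k) (Fin n) ℝ)
    (hP : IsSubspaceEmbedding P (augment X Y) (ε / 3))
    (γ ν : Fin d → ℝ)
    (hγ : ∀ β : Fin d → ℝ, sqNorm (X.mulVec γ - Y) ≤ sqNorm (X.mulVec β - Y))
    (hν : ∀ β : Fin d → ℝ,
      sqNorm (P.mulVec (X.mulVec ν - Y)) ≤ sqNorm (P.mulVec (X.mulVec β - Y)))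
    (ρ : ℝ) (hρ₀ : 0 < ρ) (hρ₁ : ρ ≤ 1) (hXγ : eNorm (X.mulVec γ) ≥ ρ * eNorm Y) :
    eNorm ν ≤ (1 + condNum X / ρ * ε) * eNorm γ := by
  have hκ0 : 0 ≤ condNum X := div_nonneg (Real.sqrt_nonneg _) (Real.sqrt_nonneg _)
  rcases Nat.eq_zero_or_pos d with hd | hd
  · subst hd
    have hνγ : ν = γ := Subsingleton.elim ν γ
    rw [hνγ]
    have h1 : 0 ≤ condNum X / ρ * ε := by positivity
    nlinarith [eNorm_nonneg γ]
  -- main case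
  set r : Fin n → ℝ := X.mulVec γ - Y with hrdef
  set z : Fin n → ℝ := X.mulVec ν - X.mulVec γ with hzdef
  -- orthogonality of the residual to the column space
  have horth : ∀ w : Fin d → ℝ, dotp (X.mulVec w) r = 0 := by
    intro w
    apply min_orth
    intro t
    have h := hγ (γ + t • w)
    have e : X.mulVec (γ + t • w) - Y = r + t • X.mulVec w := by
      rw [Matrix.mulVec_add, Matrix.mulVec_smul, hrdef]
      abel
    rwa [e] at h
  have hzr : dotp z r = 0 := by
    have := horth (ν - γ)
    rwa [Matrix.mulVec_sub] at this
  have hγr : dotp (X.mulVec γ) r = 0 := horth γ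
  -- sketched normal equations
  have hsk : dotp (P.mulVec z) (P.mulVec r) = - sqNorm (P.mulVec z) := by
    have h0 : dotp (P.mulVec z) (P.mulVec (X.mulVec ν - Y)) = 0 := by
      apply min_orth
      intro t
      have h := hν (ν + t • (ν - γ))
      have e : P.mulVec (X.mulVec (ν + t • (ν - γ)) - Y)
          = P.mulVec (X.mulVec ν - Y) + t • P.mulVec z := by
        rw [Matrix.mulVec_add (A := X), Matrix.mulVec_smul, Matrix.mulVec_sub (A := X)]
        rw [show X.mulVec ν - X.mulVec γ = z from rfl]
        rw [show X.mulVec ν + t • z - Y = (X.mulVec ν - Y) + t • z by abel]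
        rw [Matrix.mulVec_add, Matrix.mulVec_smul]
      rwa [e] at h
    have e2 : X.mulVec ν - Y = r + z := by rw [hrdef, hzdef]; abel
    rw [e2, Matrix.mulVec_add, dotp_add_right, dotp_self] at h0
    linarith [h0]
  -- the augmented vectors realizing z and r
  set x₁ : Fin (d + 1) → ℝ := Fin.snoc (ν - γ) 0 with hx₁
  set x₂ : Fin (d + 1) → ℝ := Fin.snoc γ (-1) with hx₂
  have hax1 : (augment X Y).mulVec x₁ = z := by
    rw [hx₁, augment_mulVec, Matrix.mulVec_sub, hzdef, zero_smul, add_zero]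
  have hax2 : (augment X Y).mulVec x₂ = r := by
    rw [hx₂, augment_mulVec, hrdef, neg_one_smul, sub_eq_add_neg]
  set Z : ℝ := sqNorm z with hZ
  set R : ℝ := sqNorm r with hR
  set Dp : ℝ := dotp (P.mulVec z) (P.mulVec r) with hDp
  have hZ0 : 0 ≤ Z := sqNorm_nonneg z
  have hR0 : 0 ≤ R := sqNorm_nonneg r
  -- embedding, applied to combinations
  have hquad : ∀ s : ℝ, 4 * s * Dp ≤ 2 * (ε / 3) * (s ^ 2 * Z + R) := by
    intro s
    have hp := (hP (s • x₁ + x₂)).2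
    have hm := (hP (s • x₁ - x₂)).1
    have ea : (augment X Y).mulVec (s • x₁ + x₂) = s • z + r := by
      rw [Matrix.mulVec_add, Matrix.mulVec_smul, hax1, hax2]
    have eb : (augment X Y).mulVec (s • x₁ - x₂) = s • z - r := by
      rw [Matrix.mulVec_sub, Matrix.mulVec_smul, hax1, hax2]
    rw [← Matrix.mulVec_mulVec] at hp hm
    rw [ea] at hp
    rw [eb] at hm
    rw [Matrix.mulVec_add, Matrix.mulVec_smul] at hp
    rw [Matrix.mulVec_sub, Matrix.mulVec_smul] at hm
    rw [sqNorm_smul_add, sqNorm_smul_add] at hp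
    rw [sqNorm_smul_sub, sqNorm_smul_sub] at hm
    rw [hzr] at hp hm
    rw [← hZ, ← hR, ← hDp] at hp hm
    nlinarith [hp, hm]
  have hkey : ∀ s : ℝ, 0 ≤ (ε / 3 * Z) * s ^ 2 + (2 * Dp) * s + (ε / 3 * R) := by
    intro s
    have := hquad (-s)
    nlinarith [this]
  have hdisc := quad_disc _ _ _ (mul_nonneg (by linarith) hZ0) (mul_nonneg (by linarith) hR0) hkey
  -- lower bound for sqNorm (P z)
  have hPZ : (1 - ε / 3) * Z ≤ sqNorm (P.mulVec z) := by
    have h := (hP x₁).1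
    rw [← Matrix.mulVec_mulVec, hax1, ← hZ] at h
    exact h
  have hPZ0 : 0 ≤ sqNorm (P.mulVec z) := sqNorm_nonneg _
  -- Z ≤ ε² R
  have hZle : Z ≤ ε ^ 2 * R := by
    have h1 : (sqNorm (P.mulVec z)) ^ 2 ≤ (ε / 3) ^ 2 * Z * R := by
      rw [hsk] at hDp
      nlinarith [hdisc]
    rcases eq_or_lt_of_le hZ0 with h0 | h0
    · rw [← h0]
      positivity
    · have hu : (5:ℝ)/6 ≤ 1 - ε / 3 := by linarith
      have h2 : ((1 - ε / 3) * Z) ^ 2 ≤ (sqNorm (P.mulVec z)) ^ 2 := by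
        have hnn : 0 ≤ (1 - ε / 3) * Z := mul_nonneg (by linarith) hZ0
        exact pow_le_pow_left₀ hnn hPZ 2
      nlinarith [h2, h1, mul_pos h0 h0, hR0, sq_nonneg ε, mul_nonneg hR0 hε.le]
  -- Pythagoras: ‖Y‖² = ‖Xγ‖² + ‖r‖²
  set G : ℝ := sqNorm (X.mulVec γ) with hG
  have hPyth : sqNorm Y = G + R := by
    have e : Y = X.mulVec γ - r := by rw [hrdef]; abel
    rw [e, sqNorm_sub, hγr, ← hG, ← hR]; ring
  -- ρ² ‖Y‖² ≤ ‖Xγ‖²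
  have hρY : ρ ^ 2 * sqNorm Y ≤ G := by
    have h1 : (ρ * eNorm Y) * (ρ * eNorm Y) ≤ eNorm (X.mulVec γ) * eNorm (X.mulVec γ) :=
      mul_self_le_mul_self (mul_nonneg hρ₀.le (eNorm_nonneg Y)) hXγ
    calc ρ ^ 2 * sqNorm Y = (ρ * eNorm Y) * (ρ * eNorm Y) := by
          rw [← sq_eNorm Y]; ring
      _ ≤ eNorm (X.mulVec γ) * eNorm (X.mulVec γ) := h1
      _ = G := by rw [← sq, hG, sq_eNorm]
  have hRρ : ρ ^ 2 * R ≤ G := by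
    have hG0 : 0 ≤ G := sqNorm_nonneg _
    nlinarith [hρY, hPyth, sq_nonneg ρ, mul_nonneg (sq_nonneg ρ) hG0]
  -- singular value bounds
  have hσmin := sigMinSq_mul_le X (ν - γ)
  have hXsub : X.mulVec (ν - γ) = z := by rw [Matrix.mulVec_sub, hzdef]
  rw [hXsub, ← hZ] at hσmin
  have hσmax := le_sigMaxSq_mul X γ
  rw [← hG] at hσmax
  have hm0 : 0 < sigMinSq X := sigMinSq_pos X hd hrank
  have hM0 : 0 ≤ sigMaxSq X := sigMaxSq_nonneg X hd
  set W : ℝ := sqNorm (ν - γ) with hW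
  have hW0 : 0 ≤ W := sqNorm_nonneg _
  -- the master inequality
  have hmaster : ρ ^ 2 * (sigMinSq X * W) ≤ ε ^ 2 * (sigMaxSq X * sqNorm γ) := by
    have c1 : ρ ^ 2 * (sigMinSq X * W) ≤ ρ ^ 2 * Z :=
      mul_le_mul_of_nonneg_left hσmin (sq_nonneg ρ)
    have c2 : ρ ^ 2 * Z ≤ ρ ^ 2 * (ε ^ 2 * R) :=
      mul_le_mul_of_nonneg_left hZle (sq_nonneg ρ)
    have c3 : ρ ^ 2 * (ε ^ 2 * R) = ε ^ 2 * (ρ ^ 2 * R) := by ring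
    have c4 : ε ^ 2 * (ρ ^ 2 * R) ≤ ε ^ 2 * G :=
      mul_le_mul_of_nonneg_left hRρ (sq_nonneg ε)
    have c5 : ε ^ 2 * G ≤ ε ^ 2 * (sigMaxSq X * sqNorm γ) :=
      mul_le_mul_of_nonneg_left hσmax (sq_nonneg ε)
    linarith
  -- condition number
  set c : ℝ := condNum X / ρ * ε with hc
  have hc0 : 0 ≤ c := by positivity
  have hc2 : c ^ 2 = sigMaxSq X * ε ^ 2 / (sigMinSq X * ρ ^ 2) := by
    rw [hc, condNum, mul_pow, div_pow, div_pow, Real.sq_sqrt hM0, Real.sq_sqrt hm0.le]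
    ring
  have hWc : W ≤ (c * eNorm γ) ^ 2 := by
    rw [mul_pow, hc2, sq_eNorm]
    rw [div_mul_eq_mul_div, le_div_iff₀ (by positivity)]
    nlinarith [hmaster]
  have hstep : eNorm (ν - γ) ≤ c * eNorm γ := by
    have := Real.sqrt_le_sqrt hWc
    rw [Real.sqrt_sq (mul_nonneg hc0 (eNorm_nonneg γ))] at this
    exact this
  have htri : eNorm ν ≤ eNorm γ + eNorm (ν - γ) := by
    have e : ν = γ + (ν - γ) := by abel
    calc eNorm ν = eNorm (γ + (ν - γ)) := by rw [← e]
      _ ≤ eNorm γ + eNorm (ν - γ) := eNorm_add_le _ _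
  have : eNorm ν ≤ eNorm γ + c * eNorm γ := le_trans htri (by linarith)
  calc eNorm ν ≤ eNorm γ + c * eNorm γ := this
    _ = (1 + c) * eNorm γ := by ring
    _ = (1 + condNum X / ρ * ε) * eNorm γ := by rw [hc]
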